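/- For Hermitian positive semi-definite matrices A and B in C^{n×n}, the parallel sum A:B = A(A+B)^† B is Hermitian positive semi-definite. -/

import Mathlib

open scoped Matrix Matrix.Norms.L2Operator ComplexOrder

/-- `MPInv A B` means `B` is the Moore-Penrose inverse of `A`. -/
def MPInv {n : ℕ} (A B : Matrix (Fin n) (Fin n) ℂ) : Prop :=
  A * B * A = A ∧ B * A * B = B ∧ (A * B).IsHermitian ∧ (B * A).IsHermitian

/-- The parallel sum of PSD matrices is PSD. -/
theorem parallel_sum_posSemidef {n : ℕ} (A B Sd : Matrix (Fin n) (Fin n) ℂ)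
    (hA : A.PosSemidef) (hB : B.PosSemidef) (hSd : MPInv (A + B) Sd) :
    (A * Sd * B).PosSemidef := by
  obtain ⟨h1, h2, h3, h4⟩ := hSd
  set S : Matrix (Fin n) (Fin n) ℂ := A + B with hSdef
  have hS : S.PosSemidef := hA.add hB
  have hSH : Sᴴ = S := hS.1
  -- conjTranspose versions of the Penrose identities
  have hY1 : S * Sdᴴ * S = S := by
    have := congrArg Matrix.conjTranspose h1
    simpa [Matrix.conjTranspose_mul, hSH, Matrix.mul_assoc] using this
  have hY2 : Sdᴴ * S * Sdᴴ = Sdᴴ := by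
    have := congrArg Matrix.conjTranspose h2
    simpa [Matrix.conjTranspose_mul, hSH, Matrix.mul_assoc] using this
  have hcne : S * Sdᴴ = Sd * S := by
    calc S * Sdᴴ = (Sd * Sᴴ)ᴴ := by
          simp [Matrix.conjTranspose_mul, hSH]
      _ = (Sd * S)ᴴ := by rw [hSH]
      _ = Sd * S := h4
  have hcne2 : Sdᴴ * S = S * Sd := by
    calc Sdᴴ * S = (Sᴴ * Sd)ᴴ := by
          simp [Matrix.conjTranspose_mul, hSH]
      _ = (S * Sd)ᴴ := by rw [hSH]
      _ = S * Sd := h3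
  have hP : ((S * Sdᴴ)ᴴ) = S * Sdᴴ := by rw [hcne] at *; exact h4
  -- commutation
  have key : S * Sd = Sd * S := by
    calc S * Sd = (S * Sdᴴ) * (S * Sd) := by
          rw [← Matrix.mul_assoc, hY1]
      _ = ((S * Sd) * (S * Sdᴴ))ᴴ := by
          rw [Matrix.conjTranspose_mul, hP, h3.eq]
      _ = (S * Sdᴴ)ᴴ := by rw [← Matrix.mul_assoc, h1]
      _ = Sd * S := by
          rw [Matrix.conjTranspose_mul, Matrix.conjTranspose_conjTranspose, hSH]
  -- Sd is Hermitian
  have hherm : Sdᴴ = Sd := by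
    calc Sdᴴ = Sdᴴ * S * Sdᴴ := hY2.symm
      _ = Sdᴴ * (S * Sdᴴ) := Matrix.mul_assoc _ _ _
      _ = Sdᴴ * (S * Sd) := by rw [hcne, ← key]
      _ = (Sdᴴ * S) * Sd := (Matrix.mul_assoc _ _ _).symm
      _ = (S * Sd) * Sd := by rw [hcne2]
      _ = (Sd * S) * Sd := by rw [key]
      _ = Sd := h2
  -- kernel inclusion : ker S ⊆ ker A
  have hker : ∀ x : Fin n → ℂ, S *ᵥ x = 0 → A *ᵥ x = 0 := by
    intro x hx
    have h0 : star x ⬝ᵥ A *ᵥ x + star x ⬝ᵥ B *ᵥ x = 0 := by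
      have hz : star x ⬝ᵥ S *ᵥ x = 0 := by rw [hx, dotProduct_zero]
      rw [hSdef, Matrix.add_mulVec, dotProduct_add] at hz
      exact hz
    have hzero : star x ⬝ᵥ A *ᵥ x = 0 :=
      ((add_eq_zero_iff_of_nonneg (hA.dotProduct_mulVec_nonneg x) (hB.dotProduct_mulVec_nonneg x)).mp h0).1
    exact (hA.dotProduct_mulVec_zero_iff x).mp hzero
  -- A * Sd * S = A
  have hASdS : A * (Sd * S) = A := by
    have hC : S * (1 - Sd * S) = 0 := by
      rw [Matrix.mul_sub, Matrix.mul_one, ← Matrix.mul_assoc, h1, sub_self]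
    have hAC : A * (1 - Sd * S) = 0 := by
      ext i j
      have hcol : S *ᵥ (fun k => (1 - Sd * S) k j) = 0 := by
        ext i'
        have := congrFun (congrFun hC i') j
        simpa [Matrix.mul_apply, Matrix.mulVec, dotProduct] using this
      have := congrFun (hker _ hcol) i
      simpa [Matrix.mul_apply, Matrix.mulVec, dotProduct] using this
    rw [Matrix.mul_sub, Matrix.mul_one] at hAC
    exact (sub_eq_zero.mp hAC).symm
  -- S * Sd * A = A
  have hSSdA : (S * Sd) * A = A := by
    have := congrArg Matrix.conjTranspose hASdS
    simpa [Matrix.conjTranspose_mul, hherm, hSH, hA.1.eq, Matrix.mul_assoc] using this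
  -- the parallel sum equals A - A * Sd * A
  have hBeq : B = S - A := by rw [hSdef]; abel
  have hM : A * Sd * B = A - A * Sd * A := by
    rw [hBeq, Matrix.mul_sub, Matrix.mul_assoc A Sd S, hASdS]
  rw [hM]
  rw [Matrix.posSemidef_iff_dotProduct_mulVec]
  constructor
  · -- Hermitian
    show (A - A * Sd * A)ᴴ = A - A * Sd * A
    rw [Matrix.conjTranspose_sub, hA.1.eq, Matrix.conjTranspose_mul,
      Matrix.conjTranspose_mul, hherm, hA.1.eq, Matrix.mul_assoc]
  · intro x
    set y : Fin n → ℂ := Sd *ᵥ (A *ᵥ x) with hy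
    have hSy : S *ᵥ y = A *ᵥ x := by
      rw [hy, Matrix.mulVec_mulVec, Matrix.mulVec_mulVec, hSSdA]
    set a : ℂ := star x ⬝ᵥ A *ᵥ x with ha
    set s : ℂ := star y ⬝ᵥ S *ᵥ y with hs
    set ay : ℂ := star y ⬝ᵥ A *ᵥ y with hay
    set bq : ℂ := star y ⬝ᵥ B *ᵥ y with hbq
    have hs_nonneg : 0 ≤ s := hS.dotProduct_mulVec_nonneg y
    have hs_star : star s = s := (IsSelfAdjoint.of_nonneg hs_nonneg)
    have f1 : star y ⬝ᵥ A *ᵥ x = s := by rw [← hSy]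
    have f2 : star x ⬝ᵥ A *ᵥ y = s := by
      have : star (star x ⬝ᵥ A *ᵥ y) = s := by
        rw [Matrix.star_dotProduct, star_star, Matrix.star_mulVec,
          ← Matrix.dotProduct_mulVec, hA.1.eq, f1]
      calc star x ⬝ᵥ A *ᵥ y = star (star (star x ⬝ᵥ A *ᵥ y)) := (star_star _).symm
        _ = star s := by rw [this]
        _ = s := hs_star
    have fsplit : ay + bq = s := by
      rw [hay, hbq, hs, ← dotProduct_add, ← Matrix.add_mulVec, ← hSdef]
    have q1 : 0 ≤ a - s - s + ay := by
      have := hA.dotProduct_mulVec_nonneg (x - y)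
      rwa [star_sub, Matrix.mulVec_sub, dotProduct_sub,
        sub_dotProduct, sub_dotProduct, f2, f1,
        ← ha, ← hay, show a - s - (s - ay) = a - s - s + ay by ring] at this
    have hbq_nonneg : 0 ≤ bq := hB.dotProduct_mulVec_nonneg y
    have f3 : star x ⬝ᵥ (A - A * Sd * A) *ᵥ x = a - s := by
      rw [Matrix.sub_mulVec, dotProduct_sub, ← ha,
        Matrix.mul_assoc, ← Matrix.mulVec_mulVec, ← Matrix.mulVec_mulVec, ← hy, f2]
    rw [f3]
    have : a - s = (a - s - s + ay) + bq := by linear_combination - fsplit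
    rw [this]
    exact add_nonneg q1 hbq_nonneg
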